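/- For any odd n ≥ 3, there exists a boolean function κ : 𝔹^n → 𝔹 and a point v ∈ 𝔹^n such that feature n is relevant for the instance (v, κ(v)) yet its Shapley value Sv(n) equals zero. -/
import Mathlib


open Finset

/-- `X` is a weak abductive explanation (weak AXp) for classifier `κ` at point `v`:
every point agreeing with `v` on `X` gets the same prediction as `v`. -/
def weakAXp {n : ℕ} (κ : (Fin n → Bool) → Bool) (v : Fin n → Bool)
    (X : Finset (Fin n)) : Prop :=
  ∀ x : Fin n → Bool, (∀ i ∈ X, x i = v i) → κ x = κ v

/-- `X` is an AXp: a subset-minimal weak AXp. -/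
def AXp {n : ℕ} (κ : (Fin n → Bool) → Bool) (v : Fin n → Bool)
    (X : Finset (Fin n)) : Prop :=
  weakAXp κ v X ∧ ∀ X' ⊂ X, ¬ weakAXp κ v X'

/-- `Y` is a weak contrastive explanation (weak CXp) for `κ` at `v`:
some point agreeing with `v` outside `Y` gets a different prediction. -/
def weakCXp {n : ℕ} (κ : (Fin n → Bool) → Bool) (v : Fin n → Bool)
    (Y : Finset (Fin n)) : Prop :=
  ∃ x : Fin n → Bool, (∀ i ∉ Y, x i = v i) ∧ κ x ≠ κ v

/-- `Y` is a CXp: a subset-minimal weak CXp. -/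
def CXp {n : ℕ} (κ : (Fin n → Bool) → Bool) (v : Fin n → Bool)
    (Y : Finset (Fin n)) : Prop :=
  weakCXp κ v Y ∧ ∀ Y' ⊂ Y, ¬ weakCXp κ v Y'

/-- A feature is relevant if it occurs in some AXp. -/
def Relevant {n : ℕ} (κ : (Fin n → Bool) → Bool) (v : Fin n → Bool) (i : Fin n) : Prop :=
  ∃ X, AXp κ v X ∧ i ∈ X

/-- A feature is irrelevant if it occurs in no AXp. -/
def Irrelevant {n : ℕ} (κ : (Fin n → Bool) → Bool) (v : Fin n → Bool) (i : Fin n) : Prop :=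
  ¬ Relevant κ v i

/-- `phi κ v S` : average value of `κ` over points agreeing with `v` on `S`
(uniform distribution). -/
noncomputable def phi {n : ℕ} (κ : (Fin n → Bool) → Bool) (v : Fin n → Bool)
    (S : Finset (Fin n)) : ℝ :=
  (1 / 2 ^ (n - S.card)) *
    ∑ x ∈ Finset.univ.filter (fun x : Fin n → Bool => ∀ i ∈ S, x i = v i),
      (if κ x then (1 : ℝ) else 0)

/-- Shapley value of feature `i` for classifier `κ` at point `v`. -/
noncomputable def Sv {n : ℕ} (κ : (Fin n → Bool) → Bool) (v : Fin n → Bool)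
    (i : Fin n) : ℝ :=
  ∑ S ∈ (Finset.univ.erase i).powerset,
    ((S.card.factorial * (n - S.card - 1).factorial : ℝ) / n.factorial) *
      (phi κ v (insert i S) - phi κ v S)

/-- phi of a two-point indicator function. -/
lemma phi_two_points {n : ℕ} (p q : Fin n → Bool) (hpq : p ≠ q) (v : Fin n → Bool)
    (S : Finset (Fin n)) :
    phi (fun x => decide (x = p) || decide (x = q)) v S =
      (1 / 2 ^ (n - S.card)) *
        ((if ∀ i ∈ S, p i = v i then (1:ℝ) else 0) +
         (if ∀ i ∈ S, q i = v i then (1:ℝ) else 0)) := by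
  unfold phi
  congr 1
  have key : ∀ x : Fin n → Bool,
      (if (decide (x = p) || decide (x = q) : Bool) then (1:ℝ) else 0)
        = (if x = p then (1:ℝ) else 0) + (if x = q then (1:ℝ) else 0) := by
    intro x
    by_cases h1 : x = p <;> by_cases h2 : x = q
    · exact absurd (h1 ▸ h2) hpq
    · simp [h1, h2, hpq]
    · simp [h1, h2, Ne.symm hpq]
    · simp [h1, h2]
  rw [Finset.sum_congr rfl (fun x _ => key x), Finset.sum_add_distrib,
    Finset.sum_ite_eq' _ p (fun _ => (1:ℝ)), Finset.sum_ite_eq' _ q (fun _ => (1:ℝ))]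
  simp [Finset.mem_filter]


/-- the point with ones exactly at `a` and `b` -/
def ptP {n : ℕ} (a b : Fin n) : Fin n → Bool := fun j => decide (j = a) || decide (j = b)

/-- the point with a one exactly at `c` -/
def ptQ {n : ℕ} (c : Fin n) : Fin n → Bool := fun j => decide (j = c)

/-- indicator of the two points -/
def tpK {n : ℕ} (a b c : Fin n) : (Fin n → Bool) → Bool :=
  fun x => decide (x = ptP a b) || decide (x = ptQ c)

/-- the all-zeros point -/
def vz (n : ℕ) : Fin n → Bool := fun _ => false

theorem main_aux {n : ℕ} (a b c : Fin n) (hab : a ≠ b) (hac : a ≠ c) (hbc : b ≠ c) :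
    Relevant (tpK a b c) (vz n) b ∧ Sv (tpK a b c) (vz n) b = 0 := by
  set p : Fin n → Bool := ptP a b with hp
  set q : Fin n → Bool := ptQ c with hq
  set κ : (Fin n → Bool) → Bool := tpK a b c with hκ
  set v : Fin n → Bool := vz n with hv
  have hpq : p ≠ q := by
    intro h
    have := congrFun h a
    simp [hp, hq, ptP, ptQ, hac] at this
  have hκx : ∀ x, κ x = (decide (x = p) || decide (x = q)) := fun x => rfl
  have hκv : κ v = false := by
    rw [hκx]
    simp only [Bool.or_eq_false_iff, decide_eq_false_iff_not]
    constructor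
    · intro h; have := congrFun h b; simp [hv, hp, vz, ptP] at this
    · intro h; have := congrFun h c; simp [hv, hq, vz, ptQ] at this
  constructor
  · -- relevance : X = {c, b}
    refine ⟨{c, b}, ⟨?_, ?_⟩, by simp⟩
    · intro x hx
      rw [hκv]
      have hxc : x c = false := hx c (by simp)
      have hxb : x b = false := hx b (by simp)
      rw [hκx]
      simp only [Bool.or_eq_false_iff, decide_eq_false_iff_not]
      constructor
      · intro h; rw [h] at hxb; simp [hp, ptP] at hxb
      · intro h; rw [h] at hxc; simp [hq, ptQ] at hxc
    · intro X' hX' hw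
      by_cases hcX : c ∈ X'
      · have hbX : b ∉ X' := by
          intro hbX
          exact hX'.2 (by intro i hi; simp at hi; rcases hi with rfl | rfl <;> assumption)
        have := hw p (by
          intro i hi
          have : i = c := by
            have := hX'.1 hi
            simp at this
            rcases this with rfl | rfl
            · rfl
            · exact absurd hi hbX
          subst this
          simp [hp, hv, ptP, vz, Ne.symm hac, Ne.symm hbc])
        rw [hκv, hκx] at this
        simp at this
      · have := hw q (by
          intro i hi
          have : i = b := by
            have := hX'.1 hi
            simp at this
            rcases this with rfl | rfl
            · exact absurd hi hcX
            · rfl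
          subst this
          simp [hq, hv, ptQ, vz, hbc])
        rw [hκv, hκx] at this
        simp [hpq.symm] at this
  · -- Shapley value is zero
    unfold Sv
    set f : Finset (Fin n) → ℝ := fun S =>
      ((S.card.factorial * (n - S.card - 1).factorial : ℝ) / n.factorial) *
        (phi κ v (insert b S) - phi κ v S) with hf
    show ∑ S ∈ (Finset.univ.erase b).powerset, f S = 0
    have hterm : ∀ S ∈ (Finset.univ.erase b).powerset, f S =
        ((S.card.factorial * (n - S.card - 1).factorial : ℝ) / n.factorial) *
          (1 / 2 ^ (n - S.card)) *
          ((if c ∈ S then (0:ℝ) else 1) - (if a ∈ S then (0:ℝ) else 1)) := by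
      intro S hS
      rw [Finset.mem_powerset] at hS
      have hbS : b ∉ S := fun h => (Finset.mem_erase.mp (hS h)).1 rfl
      have hcard : S.card ≤ n - 1 := by
        have := Finset.card_le_card hS
        simpa [Finset.card_erase_of_mem] using this
      have hcardi : (insert b S).card = S.card + 1 := Finset.card_insert_of_notMem hbS
      have e1 : phi κ v S = (1 / 2 ^ (n - S.card)) *
          ((if a ∈ S then (0:ℝ) else 1) + (if c ∈ S then (0:ℝ) else 1)) := by
        rw [show phi κ v S = phi (fun x => decide (x = p) || decide (x = q)) v S from rfl, phi_two_points p q hpq]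
        congr 1
        have h1 : (∀ i ∈ S, p i = v i) ↔ a ∉ S := by
          constructor
          · intro h haS
            have := h a haS; simp [hp, hv, ptP, vz] at this
          · intro haS i hi
            have hia : i ≠ a := fun h => haS (h ▸ hi)
            have hib : i ≠ b := fun h => hbS (h ▸ hi)
            simp [hp, hv, ptP, vz, hia, hib]
        have h2 : (∀ i ∈ S, q i = v i) ↔ c ∉ S := by
          constructor
          · intro h hcS
            have := h c hcS; simp [hq, hv, ptQ, vz] at this
          · intro hcS i hi
            have hic : i ≠ c := fun h => hcS (h ▸ hi)
            simp [hq, hv, ptQ, vz, hic]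
        rw [if_congr h1 rfl rfl, if_congr h2 rfl rfl]
        by_cases hA : a ∈ S <;> by_cases hC : c ∈ S <;> simp [hA, hC]
      have e2 : phi κ v (insert b S) = (1 / 2 ^ (n - S.card - 1)) *
          (if c ∈ S then (0:ℝ) else 1) := by
        rw [show phi κ v (insert b S) = phi (fun x => decide (x = p) || decide (x = q)) v (insert b S) from rfl, phi_two_points p q hpq, hcardi]
        have h1 : ¬ (∀ i ∈ insert b S, p i = v i) := by
          intro h
          have := h b (Finset.mem_insert_self _ _)
          simp [hp, hv, ptP, vz] at this
        have h2 : (∀ i ∈ insert b S, q i = v i) ↔ c ∉ S := by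
          constructor
          · intro h hcS
            have := h c (Finset.mem_insert_of_mem hcS); simp [hq, hv, ptQ, vz] at this
          · intro hcS i hi
            rcases Finset.mem_insert.mp hi with rfl | hi'
            · simp [hq, hv, ptQ, vz, hbc]
            · have hic : i ≠ c := fun h => hcS (h ▸ hi')
              simp [hq, hv, ptQ, vz, hic]
        rw [if_neg h1, if_congr h2 rfl rfl]
        have : n - (S.card + 1) = n - S.card - 1 := by omega
        rw [this]
        by_cases hC : c ∈ S <;> simp [hC]
      simp only [hf]
      rw [e1, e2]
      have hpow : (2:ℝ) ^ (n - S.card) = 2 * 2 ^ (n - S.card - 1) := by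
        rw [← pow_succ']
        congr 1
        omega
      have h2ne : (2:ℝ) ^ (n - S.card - 1) ≠ 0 := by positivity
      by_cases hA : a ∈ S <;> by_cases hC : c ∈ S <;>
        simp only [hA, hC, if_true, if_false] <;> rw [hpow] <;> field_simp <;> ring
    rw [Finset.sum_congr rfl hterm]
    -- involution : swap a and c
    set σ : Fin n ≃ Fin n := Equiv.swap a c with hσ
    have hσb : σ b = b := Equiv.swap_apply_of_ne_of_ne (Ne.symm hab) hbc
    refine Finset.sum_involution (fun S _ => S.map σ.toEmbedding) ?_ ?_ ?_ ?_
    · intro S hS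
      have hcardmap : (S.map σ.toEmbedding).card = S.card := Finset.card_map _
      have hmema : a ∈ S.map σ.toEmbedding ↔ c ∈ S := by
        rw [Finset.mem_map_equiv]
        simp [hσ, Equiv.symm_swap, Equiv.swap_apply_left]
      have hmemc : c ∈ S.map σ.toEmbedding ↔ a ∈ S := by
        rw [Finset.mem_map_equiv]
        simp [hσ, Equiv.symm_swap, Equiv.swap_apply_right]
      rw [hcardmap, if_congr hmema rfl rfl, if_congr hmemc rfl rfl]
      ring
    · intro S hS hfS hgS
      apply hfS
      have hmemc : c ∈ S ↔ a ∈ S := by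
        conv_lhs => rw [← hgS]
        rw [Finset.mem_map_equiv]
        simp [hσ, Equiv.symm_swap, Equiv.swap_apply_right]
      by_cases hA : a ∈ S
      · rw [if_pos (hmemc.mpr hA), if_pos hA]; ring
      · rw [if_neg (fun h => hA (hmemc.mp h)), if_neg hA]; ring
    · intro S hS
      rw [Finset.mem_powerset] at hS ⊢
      intro i hi
      rw [Finset.mem_map_equiv] at hi
      have h2 := hS hi
      rw [Finset.mem_erase] at h2 ⊢
      refine ⟨?_, Finset.mem_univ _⟩
      intro h
      subst h
      apply h2.1
      rw [hσ, Equiv.symm_swap]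
      exact Equiv.swap_apply_of_ne_of_ne (Ne.symm hab) hbc
    · intro S hS
      show (S.map σ.toEmbedding).map σ.toEmbedding = S
      rw [Finset.map_map]
      have he : σ.toEmbedding.trans σ.toEmbedding = Function.Embedding.refl _ := by
        ext i
        simp [hσ, Equiv.swap_apply_self]
      rw [he, Finset.map_refl]

/-- Issue I3: for any odd `n ≥ 3` there is a boolean function and a point for which
feature `n` is relevant yet has Shapley value zero. -/
theorem stmt6 (n : ℕ) (hn : 3 ≤ n) (hodd : Odd n) :
    ∃ (κ : (Fin n → Bool) → Bool) (v : Fin n → Bool),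
      Relevant κ v ⟨n - 1, by omega⟩ ∧ Sv κ v ⟨n - 1, by omega⟩ = 0 := by
  have h := main_aux (n := n) ⟨n - 2, by omega⟩ ⟨n - 1, by omega⟩ ⟨0, by omega⟩
    (by simp [Fin.ext_iff]; omega) (by simp [Fin.ext_iff]; omega) (by simp [Fin.ext_iff]; omega)
  exact ⟨_, _, h.1, h.2⟩
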